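/- arXiv:2512.16533 — 2 statements merged into one kernel-verified Lean document; each statement's English description precedes it below -/
import Mathlib

section
/- If f : ℝ^d → ℝ is differentiable and satisfies the (τ,μ)-strong quasar convexity inequality f* ≥ f(x) + (1/τ)⟨∇f(x), x* - x⟩ + (μ/2)‖x - x*‖² for all x (where x* is a minimizer, f* = f(x*), τ ∈ (0,1], μ > 0), then f satisfies the quadratic growth condition f(x) - f* ≥ (μτ/(2(2-τ)))‖x - x*‖² for all x. -/
/-- Strong quasar convexity implies quadratic growth:
`f(x) - f* ≥ (μτ/(2(2-τ)))‖x - x*‖²`. -/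
theorem sqc_implies_quadratic_growth {d : ℕ}
    (f : EuclideanSpace ℝ (Fin d) → ℝ)
    (g : EuclideanSpace ℝ (Fin d) → EuclideanSpace ℝ (Fin d))
    (hgrad : ∀ x, HasGradientAt f (g x) x)
    (τ μ : ℝ) (hτ0 : 0 < τ) (hτ1 : τ ≤ 1) (hμ : 0 < μ)
    (xstar : EuclideanSpace ℝ (Fin d))
    (hmin : ∀ y, f xstar ≤ f y)
    (hsqc : ∀ x, f xstar ≥
      f x + (1 / τ) * inner ℝ (g x) (xstar - x) + μ / 2 * ‖x - xstar‖ ^ 2) :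
    ∀ x, f x - f xstar ≥ μ * τ / (2 * (2 - τ)) * ‖x - xstar‖ ^ 2 := by
  intro x
  set R : ℝ := ‖x - xstar‖ with hR
  set c : ℝ → EuclideanSpace ℝ (Fin d) := fun t => xstar + t • (x - xstar) with hc
  set u : ℝ → ℝ := fun t => f (c t) - f xstar with hudef
  set D : ℝ → ℝ := fun t => inner ℝ (g (c t)) (x - xstar) with hDdef
  have h2τ : 0 < 2 - τ := by linarith
  have hcderiv : ∀ t : ℝ, HasDerivAt c (x - xstar) t := by
    intro t
    simpa [hc] using ((hasDerivAt_id t).smul_const (x - xstar)).const_add xstar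
  have huderiv : ∀ t : ℝ, HasDerivAt u (D t) t := by
    intro t
    have h1 := (hgrad (c t)).hasFDerivAt.comp_hasDerivAt t (hcderiv t)
    simpa [hudef, hDdef, InnerProductSpace.toDual_apply_apply, Function.comp] using
      h1.sub_const (f xstar)
  have hu0 : u 0 = 0 := by simp [hudef, hc]
  have hunn : ∀ t, 0 ≤ u t := fun t => sub_nonneg.2 (hmin _)
  -- key differential inequality
  have hkey : ∀ t : ℝ, τ * (u t + μ / 2 * (t ^ 2 * R ^ 2)) ≤ t * D t := by
    intro t
    have h := hsqc (c t)
    have h1 : xstar - c t = (-t) • (x - xstar) := by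
      simp only [hc]; module
    have h2 : (inner ℝ (g (c t)) (xstar - c t) : ℝ) = -t * D t := by
      rw [h1, real_inner_smul_right]
    have h3 : ‖c t - xstar‖ ^ 2 = t ^ 2 * R ^ 2 := by
      have : c t - xstar = t • (x - xstar) := by simp [hc]
      rw [this, norm_smul, mul_pow, Real.norm_eq_abs, sq_abs, hR]
    rw [h2, h3] at h
    have h4 : u t + μ / 2 * (t ^ 2 * R ^ 2) ≤ (1 / τ) * (t * D t) := by
      have : (1 / τ) * (-t * D t) = -((1 / τ) * (t * D t)) := by ring
      rw [this] at h
      simp only [hudef] at *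
      linarith
    calc τ * (u t + μ / 2 * (t ^ 2 * R ^ 2)) ≤ τ * ((1 / τ) * (t * D t)) :=
          mul_le_mul_of_nonneg_left h4 hτ0.le
      _ = t * D t := by field_simp
  -- gradient vanishes at the minimizer, so D 0 = 0
  have hD0 : D 0 = 0 := by
    have hlm : IsLocalMin u 0 := Filter.Eventually.of_forall fun t => by
      rw [hu0]; exact hunn t
    exact hlm.hasDerivAt_eq_zero (huderiv 0)
  set C : ℝ := μ * R ^ 2 * τ / (2 * (2 - τ)) with hCdef
  set F : ℝ → ℝ := fun t => u t * t ^ (-τ) - C * t ^ (2 - τ) with hFdef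
  have hF : ∀ t : ℝ, 0 < t → HasDerivAt F
      (D t * t ^ (-τ) + u t * (-τ * t ^ (-τ - 1)) - C * ((2 - τ) * t ^ (2 - τ - 1))) t := by
    intro t ht
    exact ((huderiv t).mul (Real.hasDerivAt_rpow_const (Or.inl ht.ne'))).sub
      ((Real.hasDerivAt_rpow_const (Or.inl ht.ne')).const_mul C)
  have hF' : ∀ t : ℝ, 0 < t →
      0 ≤ D t * t ^ (-τ) + u t * (-τ * t ^ (-τ - 1)) - C * ((2 - τ) * t ^ (2 - τ - 1)) := by
    intro t ht
    have e1 : t ^ (-τ) = t ^ (-τ - 1) * t := by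
      have h := Real.rpow_add ht (-τ - 1) 1
      rw [Real.rpow_one] at h
      rw [← h]; congr 1; ring
    have e2 : t ^ (2 - τ - 1) = t ^ (-τ - 1) * t ^ 2 := by
      have h := Real.rpow_add ht (-τ - 1) ((2:ℕ):ℝ)
      rw [Real.rpow_natCast] at h
      rw [← h]; congr 1; push_cast; ring
    have hCτ : C * (2 - τ) = μ * R ^ 2 * τ / 2 := by
      rw [hCdef]; field_simp
    have hp : (0:ℝ) ≤ t ^ (-τ - 1) := Real.rpow_nonneg ht.le _
    have hbracket : 0 ≤ t * D t - τ * u t - μ * R ^ 2 * τ / 2 * t ^ 2 := by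
      have := hkey t
      nlinarith
    have : D t * t ^ (-τ) + u t * (-τ * t ^ (-τ - 1)) - C * ((2 - τ) * t ^ (2 - τ - 1))
        = t ^ (-τ - 1) * (t * D t - τ * u t - μ * R ^ 2 * τ / 2 * t ^ 2) := by
      rw [e1, e2]
      have : C * ((2 - τ) * (t ^ (-τ - 1) * t ^ 2)) = C * (2 - τ) * (t ^ (-τ - 1) * t ^ 2) := by
        ring
      rw [this, hCτ]
      ring
    rw [this]
    exact mul_nonneg hp hbracket
  -- monotonicity: F ε ≤ F 1 for ε ∈ (0,1]
  have hstep : ∀ ε ∈ Set.Ioc (0:ℝ) 1, F ε ≤ F 1 := by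
    intro ε hε
    have hmono : MonotoneOn F (Set.Icc ε 1) := by
      apply monotoneOn_of_deriv_nonneg (convex_Icc ε 1)
      · intro t ht
        exact ((hF t (lt_of_lt_of_le hε.1 ht.1)).continuousAt).continuousWithinAt
      · intro t ht
        rw [interior_Icc] at ht
        exact ((hF t (lt_of_lt_of_le hε.1 ht.1.le)).differentiableAt).differentiableWithinAt
      · intro t ht
        rw [interior_Icc] at ht
        have htpos : 0 < t := lt_of_lt_of_le hε.1 ht.1.le
        rw [(hF t htpos).deriv]
        exact hF' t htpos
    exact hmono (Set.mem_Icc.2 ⟨le_rfl, hε.2⟩) (Set.mem_Icc.2 ⟨hε.2, le_rfl⟩) hε.2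
  -- the limit of F at 0⁺ is 0
  have hlim : Filter.Tendsto F (nhdsWithin 0 (Set.Ioi 0)) (nhds 0) := by
    have hslope : Filter.Tendsto (fun ε => u ε / ε) (nhdsWithin 0 (Set.Ioi 0)) (nhds 0) := by
      have h1 := (hasDerivAt_iff_tendsto_slope.1 (huderiv 0))
      rw [hD0] at h1
      have h2 : Filter.Tendsto (slope u 0) (nhdsWithin 0 (Set.Ioi 0)) (nhds 0) :=
        h1.mono_left (nhdsWithin_mono 0 (fun y hy => ne_of_gt hy))
      refine h2.congr' ?_
      filter_upwards [self_mem_nhdsWithin] with ε hε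
      have : (ε:ℝ) ≠ 0 := ne_of_gt hε
      simp [slope, hu0, div_eq_inv_mul]
    have hterm1 : Filter.Tendsto (fun ε => u ε * ε ^ (-τ)) (nhdsWithin 0 (Set.Ioi 0)) (nhds 0) := by
      apply squeeze_zero' (g := fun ε => u ε / ε) _ _ hslope
      · filter_upwards [self_mem_nhdsWithin] with ε (hε : 0 < ε)
        exact mul_nonneg (hunn ε) (Real.rpow_nonneg hε.le _)
      · filter_upwards [Ioc_mem_nhdsGT_of_mem ⟨le_rfl, zero_lt_one⟩] with ε hε
        have hε0 : 0 < ε := hε.1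
        have h5 : ε ^ (-τ) ≤ ε ^ (-1 : ℝ) :=
          Real.rpow_le_rpow_of_exponent_ge hε0 hε.2 (by linarith)
        have h6 : ε ^ (-1 : ℝ) = 1 / ε := by
          rw [Real.rpow_neg_one]; exact (one_div ε).symm
        calc u ε * ε ^ (-τ) ≤ u ε * (1 / ε) := by
              rw [← h6]; exact mul_le_mul_of_nonneg_left h5 (hunn ε)
          _ = u ε / ε := by ring
    have hterm2 : Filter.Tendsto (fun ε : ℝ => ε ^ (2 - τ)) (nhdsWithin 0 (Set.Ioi 0)) (nhds 0) := by
      have hid : Filter.Tendsto (fun ε : ℝ => ε) (nhdsWithin 0 (Set.Ioi 0)) (nhds 0) :=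
        Filter.tendsto_id.mono_left nhdsWithin_le_nhds
      apply squeeze_zero' (g := fun ε : ℝ => ε) _ _ hid
      · filter_upwards [self_mem_nhdsWithin] with ε (hε : 0 < ε)
        exact Real.rpow_nonneg hε.le _
      · filter_upwards [Ioc_mem_nhdsGT_of_mem ⟨le_rfl, zero_lt_one⟩] with ε hε
        calc ε ^ (2 - τ) ≤ ε ^ (1 : ℝ) :=
              Real.rpow_le_rpow_of_exponent_ge hε.1 hε.2 (by linarith)
          _ = ε := Real.rpow_one ε
    have := hterm1.sub ((hterm2.const_mul C))
    simpa using this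
  -- conclude F 1 ≥ 0
  have hF1 : 0 ≤ F 1 := by
    refine le_of_tendsto hlim ?_
    filter_upwards [Ioc_mem_nhdsGT_of_mem ⟨le_rfl, zero_lt_one⟩] with ε hε
    exact hstep ε hε
  have hc1 : c 1 = x := by simp [hc]
  have hF1val : F 1 = (f x - f xstar) - C := by
    simp [hFdef, hudef, hc1, Real.one_rpow]
  rw [hF1val] at hF1
  have : C = μ * τ / (2 * (2 - τ)) * R ^ 2 := by rw [hCdef]; ring
  linarith [hF1, this.symm.le, this.le]
end

section
/- Let F : [a,b] → ℝ be continuous and suppose F is differentiable with F'(x) = f(x) for all x ∈ [a,b] except on a countable set. Then f is Henstock–Kurzweil integrable on [a,b] and F(b) = F(a) + ∫_a^b f (in the Henstock–Kurzweil sense). -/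
/-- A tagged division of the interval `[a,b]`: a finite increasing sequence of points
from `a` to `b` together with a tag in each subinterval. -/
structure HK.TaggedDivision (a b : ℝ) where
  n : ℕ
  pts : ℕ → ℝ
  tags : ℕ → ℝ
  npos : 0 < n
  mono : ∀ i < n, pts i < pts (i + 1)
  left : pts 0 = a
  right : pts n = b
  tag_mem : ∀ i < n, tags i ∈ Set.Icc (pts i) (pts (i + 1))

/-- A tagged division is `δ`-fine for a gauge `δ` if each subinterval is contained in
the `δ(tag)`-neighbourhood of its tag. -/
def HK.TaggedDivision.IsFine {a b : ℝ} (δ : ℝ → ℝ) (P : HK.TaggedDivision a b) : Prop :=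
  ∀ i < P.n, Set.Icc (P.pts i) (P.pts (i + 1)) ⊆
    Set.Icc (P.tags i - δ (P.tags i)) (P.tags i + δ (P.tags i))

/-- The Riemann sum of `f` over a tagged division. -/
def HK.riemannSum {a b : ℝ} (f : ℝ → ℝ) (P : HK.TaggedDivision a b) : ℝ :=
  ∑ i ∈ Finset.range P.n, f (P.tags i) * (P.pts (i + 1) - P.pts i)

/-- `f` has Henstock–Kurzweil integral `I` on `[a,b]`. -/
def HK.HasIntegral (f : ℝ → ℝ) (a b I : ℝ) : Prop :=
  ∀ ε > (0 : ℝ), ∃ δ : ℝ → ℝ, (∀ x, 0 < δ x) ∧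
    ∀ P : HK.TaggedDivision a b, P.IsFine δ → |HK.riemannSum f P - I| ≤ ε

namespace HK

theorem TaggedDivision.pts_lt {a b : ℝ} (P : TaggedDivision a b) :
    ∀ {i j : ℕ}, i < j → j ≤ P.n → P.pts i < P.pts j := by
  intro i j hij hjn
  induction j with
  | zero => omega
  | succ j ih =>
    rcases Nat.lt_succ_iff_lt_or_eq.mp hij with h | h
    · exact (ih h (by omega)).trans (P.mono j (by omega))
    · subst h; exact P.mono i (by omega)

theorem TaggedDivision.pts_le {a b : ℝ} (P : TaggedDivision a b) :
    ∀ {i j : ℕ}, i ≤ j → j ≤ P.n → P.pts i ≤ P.pts j := by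
  intro i j hij hjn
  rcases eq_or_lt_of_le hij with h | h
  · rw [h]
  · exact (P.pts_lt h hjn).le

theorem TaggedDivision.tags_mem_Icc {a b : ℝ} (P : TaggedDivision a b) {i : ℕ} (hi : i < P.n) :
    P.tags i ∈ Set.Icc a b := by
  have h := P.tag_mem i hi
  constructor
  · calc a = P.pts 0 := P.left.symm
      _ ≤ P.pts i := P.pts_le (Nat.zero_le _) (by omega)
      _ ≤ P.tags i := h.1
  · calc P.tags i ≤ P.pts (i+1) := h.2
      _ ≤ P.pts P.n := P.pts_le (by omega) le_rfl
      _ = b := P.right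

theorem TaggedDivision.tags_eq {a b : ℝ} (P : TaggedDivision a b) {i j : ℕ}
    (hi : i < P.n) (hj : j < P.n) (hij : i < j) (h : P.tags i = P.tags j) : j = i + 1 := by
  by_contra hne
  have h1 : i + 1 < j := by omega
  have h2 : P.pts (i+1) < P.pts j := P.pts_lt h1 (by omega)
  have h3 := (P.tag_mem i hi).2
  have h4 := (P.tag_mem j hj).1
  rw [← h] at h4
  linarith

theorem card_le_two_of_succ {A : Finset ℕ}
    (h : ∀ i ∈ A, ∀ j ∈ A, i < j → j = i + 1) : A.card ≤ 2 := by
  rcases A.eq_empty_or_nonempty with rfl | hne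
  · simp
  · set m := A.min' hne with hm
    have hsub : A ⊆ {m, m + 1} := by
      intro i hiA
      have hmi : m ≤ i := A.min'_le i hiA
      rcases eq_or_lt_of_le hmi with h1 | h1
      · simp [← h1]
      · have := h m (A.min'_mem hne) i hiA h1
        simp [this]
    calc A.card ≤ ({m, m+1} : Finset ℕ).card := Finset.card_le_card hsub
      _ ≤ 2 := (Finset.card_insert_le _ _).trans (by simp)

theorem sum_pow_half_le (T : Finset ℕ) : ∑ k ∈ T, ((1:ℝ)/2)^k ≤ 2 := by
  have h := Summable.sum_le_tsum T (fun k _ => by positivity)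
    (summable_geometric_of_lt_one (by norm_num) (by norm_num : (1:ℝ)/2 < 1))
  rwa [tsum_geometric_two] at h

end HK

/-- Fundamental theorem of calculus for the Henstock–Kurzweil integral with a countable
exceptional set: if `F` is continuous on `[a,b]` and `F' = f` off a countable set, then
`f` is HK-integrable on `[a,b]` with integral `F(b) - F(a)`. -/
theorem hk_ftc (a b : ℝ) (hab : a < b) (F f : ℝ → ℝ)
    (hF : ContinuousOn F (Set.Icc a b))
    (S : Set ℝ) (hS : S.Countable)
    (hderiv : ∀ x ∈ Set.Icc a b \ S, HasDerivWithinAt F (f x) (Set.Icc a b) x) :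
    HK.HasIntegral f a b (F b - F a) := by
  classical
  intro ε hε
  have hba : (0:ℝ) < b - a := by linarith
  set ε' : ℝ := ε / (2 * (b - a)) with hε'def
  have hε' : 0 < ε' := by positivity
  set S' : Set ℝ := (S ∪ {a}) ∩ Set.Icc a b with hS'def
  have hS'c : S'.Countable :=
    (hS.union (Set.countable_singleton a)).mono Set.inter_subset_left
  have hS'ne : S'.Nonempty := ⟨a, ⟨Or.inr rfl, le_refl a, hab.le⟩⟩
  obtain ⟨e, he⟩ := hS'c.exists_eq_range hS'ne
  have hex : ∀ x ∈ S', ∃ k, e k = x := by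
    intro x hx; rw [he] at hx; exact hx
  set K : ℝ → ℕ := fun x => if h : ∃ k, e k = x then Nat.find h else 0 with hKdef
  have hK : ∀ x ∈ S', e (K x) = x := by
    intro x hx
    have h := hex x hx
    simp only [hKdef, dif_pos h]
    exact Nat.find_spec h
  -- gauge on points where F' = f
  have hderiv' : ∀ x, x ∈ Set.Icc a b \ (S ∪ {a}) → ∃ d, 0 < d ∧
      ∀ y ∈ Set.Icc a b, |y - x| ≤ d → |F y - F x - f x * (y - x)| ≤ ε' * |y - x| := by
    intro x hx
    have hx' : x ∈ Set.Icc a b \ S := ⟨hx.1, fun h => hx.2 (Or.inl h)⟩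
    have h := Asymptotics.isLittleO_iff.mp (hasDerivWithinAt_iff_isLittleO.mp (hderiv x hx')) hε'
    rw [Filter.eventually_iff, Metric.mem_nhdsWithin_iff] at h
    obtain ⟨d, hd, hball⟩ := h
    refine ⟨d/2, by linarith, fun y hy hyd => ?_⟩
    have hmem : y ∈ Metric.ball x d ∩ Set.Icc a b :=
      ⟨by rw [Metric.mem_ball, Real.dist_eq]; linarith, hy⟩
    have := hball hmem
    simp only [Set.mem_setOf_eq, Real.norm_eq_abs, smul_eq_mul] at this
    calc |F y - F x - f x * (y - x)| = |F y - F x - (y - x) * f x| := by ring_nf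
      _ ≤ ε' * |y - x| := this
  choose d₁ hd₁pos hd₁ using hderiv'
  -- gauge on exceptional points, via continuity
  have hcont : ∀ x, x ∈ S' → ∃ d, 0 < d ∧
      (∀ y ∈ Set.Icc a b, |y - x| ≤ d → |F y - F x| ≤ ε * ((1:ℝ)/2)^(K x) / 32) ∧
      |f x| * (2 * d) ≤ ε * ((1:ℝ)/2)^(K x) / 32 := by
    intro x hx
    have hxI : x ∈ Set.Icc a b := hx.2
    have hc : (0:ℝ) < ε * ((1:ℝ)/2)^(K x) / 32 := by positivity
    obtain ⟨d0, hd0, hF0⟩ := Metric.continuousWithinAt_iff.mp (hF x hxI) _ hc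
    set c : ℝ := ε * ((1:ℝ)/2)^(K x) / 32 with hcdef
    set M : ℝ := |f x| + 1 with hMdef
    have hM : 0 < M := by positivity
    refine ⟨min (d0/2) (c / (2 * M)), by positivity, ?_, ?_⟩
    · intro y hy hyd
      have h1 : dist y x < d0 := by
        rw [Real.dist_eq]
        have := hyd.trans (min_le_left _ _)
        linarith
      have := hF0 hy h1
      rw [Real.dist_eq] at this
      exact this.le
    · have hd : min (d0/2) (c / (2 * M)) ≤ c / (2 * M) := min_le_right _ _
      have hfx : |f x| ≤ M := by simp [hMdef]
      calc |f x| * (2 * min (d0/2) (c / (2 * M)))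
          ≤ M * (2 * (c / (2 * M))) := by
            apply mul_le_mul hfx (by linarith) (by positivity) hM.le
        _ = c := by field_simp
  choose d₂ hd₂pos hd₂a hd₂b using hcont
  -- the gauge
  set δ : ℝ → ℝ := fun x =>
    if h : x ∈ Set.Icc a b \ (S ∪ {a}) then d₁ x h
    else if h2 : x ∈ S' then d₂ x h2 else 1 with hδdef
  refine ⟨δ, ?_, ?_⟩
  · intro x
    simp only [hδdef]
    split_ifs with h h2
    · exact hd₁pos x h
    · exact hd₂pos x h2
    · norm_num
  intro P hP
  have hpts : ∀ i, i ≤ P.n → P.pts i ∈ Set.Icc a b := by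
    intro i hi
    constructor
    · calc a = P.pts 0 := P.left.symm
        _ ≤ P.pts i := P.pts_le (Nat.zero_le _) hi
    · calc P.pts i ≤ P.pts P.n := P.pts_le hi le_rfl
        _ = b := P.right
  -- key per-interval estimate
  have key : ∀ i < P.n,
      |f (P.tags i) * (P.pts (i+1) - P.pts i) - (F (P.pts (i+1)) - F (P.pts i))| ≤
        (if P.tags i ∈ S' then ε/8 * ((1:ℝ)/2)^(K (P.tags i))
         else ε' * (P.pts (i+1) - P.pts i)) := by
    intro i hi
    set x := P.tags i with hxdef
    set u := P.pts i with hudef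
    set v := P.pts (i+1) with hvdef
    have hxuv : x ∈ Set.Icc u v := P.tag_mem i hi
    have huv : u < v := P.mono i hi
    have hxI : x ∈ Set.Icc a b := P.tags_mem_Icc hi
    have huI : u ∈ Set.Icc a b := hpts i (by omega)
    have hvI : v ∈ Set.Icc a b := hpts (i+1) hi
    have hfu : u ∈ Set.Icc (x - δ x) (x + δ x) := hP i hi ⟨le_rfl, huv.le⟩
    have hfv : v ∈ Set.Icc (x - δ x) (x + δ x) := hP i hi ⟨huv.le, le_rfl⟩
    by_cases hxS : x ∈ S'
    · rw [if_pos hxS]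
      have hx2 : x ∉ Set.Icc a b \ (S ∪ {a}) := fun h => h.2 hxS.1
      have hδx : δ x = d₂ x hxS := by
        simp only [hδdef]; rw [dif_neg hx2, dif_pos hxS]
      set d := d₂ x hxS with hddef
      have hdpos : 0 < d := hd₂pos x hxS
      rw [hδx] at hfu hfv
      have hux : |u - x| ≤ d := by
        rw [abs_le]
        exact ⟨by linarith [hfu.1], by linarith [hxuv.1, hdpos]⟩
      have hvx : |v - x| ≤ d := by
        rw [abs_le]
        exact ⟨by linarith [hxuv.2, hdpos], by linarith [hfv.2]⟩
      set c : ℝ := ε * ((1:ℝ)/2)^(K x) / 32 with hcdef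
      have h1 : |F v - F x| ≤ c := hd₂a x hxS v hvI hvx
      have h2 : |F u - F x| ≤ c := hd₂a x hxS u huI hux
      have h3 : |f x| * (v - u) ≤ c := by
        have hvu : v - u ≤ 2 * d := by
          have h5 := abs_le.mp hux
          have h6 := abs_le.mp hvx
          linarith [h5.1, h6.2]
        calc |f x| * (v - u) ≤ |f x| * (2 * d) := by
              apply mul_le_mul_of_nonneg_left hvu (abs_nonneg _)
          _ ≤ c := hd₂b x hxS
      have heq : f x * (v - u) - (F v - F u) =
          (F x - F v) + (F u - F x) + f x * (v - u) := by ring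
      have habs : |f x * (v - u) - (F v - F u)| ≤
          |F x - F v| + |F u - F x| + |f x * (v - u)| := by
        rw [heq]
        exact (abs_add_le _ _).trans (add_le_add_left (abs_add_le _ _) _)
      have h4 : |f x * (v - u)| = |f x| * (v - u) := by
        rw [abs_mul, abs_of_nonneg (by linarith : (0:ℝ) ≤ v - u)]
      rw [abs_sub_comm (F x) (F v)] at habs
      rw [h4] at habs
      have hpow : (0:ℝ) ≤ ((1:ℝ)/2)^(K x) := by positivity
      calc |f x * (v - u) - (F v - F u)| ≤ |F v - F x| + |F u - F x| + |f x| * (v - u) := habs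
        _ ≤ c + c + c := by linarith
        _ ≤ ε/8 * ((1:ℝ)/2)^(K x) := by
            rw [hcdef]; nlinarith
    · rw [if_neg hxS]
      have hx1 : x ∈ Set.Icc a b \ (S ∪ {a}) := ⟨hxI, fun hc => hxS ⟨hc, hxI⟩⟩
      have hδx : δ x = d₁ x hx1 := by
        simp only [hδdef]; rw [dif_pos hx1]
      set d := d₁ x hx1 with hddef
      have hdpos : 0 < d := hd₁pos x hx1
      rw [hδx] at hfu hfv
      have hux : |u - x| ≤ d := by
        rw [abs_le]
        exact ⟨by linarith [hfu.1], by linarith [hxuv.1, hdpos]⟩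
      have hvx : |v - x| ≤ d := by
        rw [abs_le]
        exact ⟨by linarith [hxuv.2, hdpos], by linarith [hfv.2]⟩
      have h1 := hd₁ x hx1 v hvI hvx
      have h2 := hd₁ x hx1 u huI hux
      have heq : f x * (v - u) - (F v - F u) =
          -(F v - F x - f x * (v - x)) + (F u - F x - f x * (u - x)) := by ring
      have habs : |f x * (v - u) - (F v - F u)| ≤
          |F v - F x - f x * (v - x)| + |F u - F x - f x * (u - x)| := by
        rw [heq]
        exact (abs_add_le _ _).trans (by rw [abs_neg])
      have ha1 : |v - x| = v - x := abs_of_nonneg (by linarith [hxuv.2])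
      have ha2 : |u - x| = x - u := by
        rw [abs_sub_comm]; exact abs_of_nonneg (by linarith [hxuv.1])
      rw [ha1] at h1; rw [ha2] at h2
      calc |f x * (v - u) - (F v - F u)| ≤
          |F v - F x - f x * (v - x)| + |F u - F x - f x * (u - x)| := habs
        _ ≤ ε' * (v - x) + ε' * (x - u) := by linarith
        _ = ε' * (v - u) := by ring
  -- assemble
  have htel : ∑ i ∈ Finset.range P.n, (F (P.pts (i+1)) - F (P.pts i)) = F b - F a := by
    rw [Finset.sum_range_sub (fun i => F (P.pts i)), P.right, P.left]
  have hsum : HK.riemannSum f P - (F b - F a) =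
      ∑ i ∈ Finset.range P.n,
        (f (P.tags i) * (P.pts (i+1) - P.pts i) - (F (P.pts (i+1)) - F (P.pts i))) := by
    rw [Finset.sum_sub_distrib, htel]; rfl
  rw [hsum]
  have step1 : |∑ i ∈ Finset.range P.n,
        (f (P.tags i) * (P.pts (i+1) - P.pts i) - (F (P.pts (i+1)) - F (P.pts i)))| ≤
      ∑ i ∈ Finset.range P.n,
        (if P.tags i ∈ S' then ε/8 * ((1:ℝ)/2)^(K (P.tags i))
         else ε' * (P.pts (i+1) - P.pts i)) := by
    refine (Finset.abs_sum_le_sum_abs _ _).trans (Finset.sum_le_sum ?_)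
    intro i hi
    exact key i (Finset.mem_range.mp hi)
  refine step1.trans ?_
  rw [Finset.sum_ite]
  set A := (Finset.range P.n).filter (fun i => P.tags i ∈ S') with hAdef
  set B := (Finset.range P.n).filter (fun i => ¬ P.tags i ∈ S') with hBdef
  have hpartB : ∑ i ∈ B, ε' * (P.pts (i+1) - P.pts i) ≤ ε / 2 := by
    have hΔ : ∑ i ∈ B, (P.pts (i+1) - P.pts i) ≤ b - a := by
      have h1 : ∑ i ∈ B, (P.pts (i+1) - P.pts i) ≤
          ∑ i ∈ Finset.range P.n, (P.pts (i+1) - P.pts i) := by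
        apply Finset.sum_le_sum_of_subset_of_nonneg (Finset.filter_subset _ _)
        intro i hi _
        exact le_of_lt (by linarith [P.mono i (Finset.mem_range.mp hi)])
      rw [Finset.sum_range_sub P.pts, P.right, P.left] at h1
      exact h1
    rw [← Finset.mul_sum]
    calc ε' * ∑ i ∈ B, (P.pts (i+1) - P.pts i) ≤ ε' * (b - a) :=
          mul_le_mul_of_nonneg_left hΔ hε'.le
      _ = ε / 2 := by rw [hε'def]; field_simp
  have hpartA : ∑ i ∈ A, ε/8 * ((1:ℝ)/2)^(K (P.tags i)) ≤ ε / 2 := by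
    have hcomp : ∑ i ∈ A, (fun k => ε/8 * ((1:ℝ)/2)^k) (K (P.tags i)) =
        ∑ k ∈ A.image (fun i => K (P.tags i)),
          ((A.filter (fun i => K (P.tags i) = k)).card) • (ε/8 * ((1:ℝ)/2)^k) :=
      Finset.sum_comp (fun k => ε/8 * ((1:ℝ)/2)^k) (fun i => K (P.tags i))
    have hcard : ∀ k, (A.filter (fun i => K (P.tags i) = k)).card ≤ 2 := by
      intro k
      apply HK.card_le_two_of_succ
      intro i hiA j hjA hij
      simp only [Finset.mem_filter, hAdef, Finset.mem_range] at hiA hjA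
      have hti : P.tags i ∈ S' := hiA.1.2
      have htj : P.tags j ∈ S' := hjA.1.2
      have heq : P.tags i = P.tags j := by
        have h1 := hK _ hti
        have h2 := hK _ htj
        rw [hiA.2] at h1
        rw [hjA.2] at h2
        rw [← h1, ← h2]
      exact P.tags_eq hiA.1.1 hjA.1.1 hij heq
    calc ∑ i ∈ A, ε/8 * ((1:ℝ)/2)^(K (P.tags i))
        = ∑ k ∈ A.image (fun i => K (P.tags i)),
            ((A.filter (fun i => K (P.tags i) = k)).card) • (ε/8 * ((1:ℝ)/2)^k) := hcomp
      _ ≤ ∑ k ∈ A.image (fun i => K (P.tags i)), 2 * (ε/8 * ((1:ℝ)/2)^k) := by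
          apply Finset.sum_le_sum
          intro k _
          rw [nsmul_eq_mul]
          apply mul_le_mul_of_nonneg_right _ (by positivity)
          exact_mod_cast hcard k
      _ = ε/4 * ∑ k ∈ A.image (fun i => K (P.tags i)), ((1:ℝ)/2)^k := by
          rw [Finset.mul_sum]; apply Finset.sum_congr rfl; intro k _; ring
      _ ≤ ε/4 * 2 := by
          apply mul_le_mul_of_nonneg_left (HK.sum_pow_half_le _) (by positivity)
      _ = ε / 2 := by ring
  linarith
end
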